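/- Let X and Y be non-negative absolutely continuous random variables with cumulative distribution functions F_X, F_Y and densities f_X, f_Y, with 0 < F_X(x) < 1, 0 < F_Y(x) < 1 and f_X(x), f_Y(x) ≥ 0 for all x > 0. If there exists β ∈ ℝ such that X ≥_{αRAI} Y for all α < β (i.e., L̆_{α,X}(x) ≥ L̆_{α,Y}(x) for all x > 0 and all α < β), then X ≥_{rh} Y, i.e., the reversed hazard rates satisfy f_X(x)/F_X(x) ≥ f_Y(x)/F_Y(x) for all x > 0. -/

import Mathlib

open Filter Real

/-- The α-generalized reversed aging intensity function. -/
noncomputable def genRAI (F f : ℝ → ℝ) (α x : ℝ) : ℝ :=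
  if α = 0 then -(x * f x) / (F x * Real.log (F x))
  else α * x * F x ^ (α - 1) * f x / (1 - F x ^ α)

/-- If there exists `β ∈ ℝ` such that `X ≥_{αRAI} Y` for all `α < β`, then
`X ≥_{rh} Y`: the reversed hazard rates satisfy
`f_X(x)/F_X(x) ≥ f_Y(x)/F_Y(x)` for all `x > 0`. -/
theorem stmt_19 (FX fX FY fY : ℝ → ℝ)
    (hFX : ∀ x > (0:ℝ), 0 < FX x ∧ FX x < 1)
    (hFY : ∀ x > (0:ℝ), 0 < FY x ∧ FY x < 1)
    (hfX : ∀ x > (0:ℝ), 0 ≤ fX x)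
    (hfY : ∀ x > (0:ℝ), 0 ≤ fY x)
    (β : ℝ)
    (h : ∀ α < β, ∀ x > (0:ℝ), genRAI FY fY α x ≤ genRAI FX fX α x) :
    ∀ x > (0:ℝ), fY x / FY x ≤ fX x / FX x := by
  intro x hx
  obtain ⟨haX, haX1⟩ := hFX x hx
  obtain ⟨haY, haY1⟩ := hFY x hx
  have hfx := hfX x hx
  have hfy := hfY x hx
  -- key pointwise bound for large t
  have key : ∀ t : ℝ, max 0 (-β) < t →
      fY x / FY x * (1 - FX x ^ t) ≤ fX x / FX x := by
    intro t ht
    have ht0 : 0 < t := lt_of_le_of_lt (le_max_left _ _) ht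
    have htβ : -t < β := by
      have := lt_of_le_of_lt (le_max_right 0 (-β)) ht
      linarith
    have hne : (-t : ℝ) ≠ 0 := by linarith
    have H := h (-t) htβ x hx
    have hp : FX x ^ t < 1 := rpow_lt_one haX.le haX1 ht0
    have hq : FY x ^ t < 1 := rpow_lt_one haY.le haY1 ht0
    have hpp : 0 < FX x ^ t := rpow_pos_of_pos haX t
    have hqq : 0 < FY x ^ t := rpow_pos_of_pos haY t
    -- rewrite the genRAI terms
    have eqX : genRAI FX fX (-t) x = t * x * fX x / (FX x * (1 - FX x ^ t)) := by
      rw [genRAI, if_neg hne]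
      have h1 : FX x ^ (-t - 1) = (FX x ^ t)⁻¹ * (FX x)⁻¹ := by
        rw [show (-t - 1 : ℝ) = (-t) + (-1) by ring, rpow_add haX,
          rpow_neg haX.le, rpow_neg_one]
      have h2 : FX x ^ (-t : ℝ) = (FX x ^ t)⁻¹ := by rw [rpow_neg haX.le]
      have hinv : 1 < (FX x ^ t)⁻¹ := (one_lt_inv₀ hpp).mpr hp
      have hd1 : (1 - (FX x ^ t)⁻¹ : ℝ) ≠ 0 := by linarith
      have hd2 : (FX x * (1 - FX x ^ t) : ℝ) ≠ 0 := by
        exact (mul_pos haX (by linarith)).ne'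
      rw [h1, h2, div_eq_div_iff hd1 hd2]
      field_simp
      ring
    have eqY : genRAI FY fY (-t) x = t * x * fY x / (FY x * (1 - FY x ^ t)) := by
      rw [genRAI, if_neg hne]
      have h1 : FY x ^ (-t - 1) = (FY x ^ t)⁻¹ * (FY x)⁻¹ := by
        rw [show (-t - 1 : ℝ) = (-t) + (-1) by ring, rpow_add haY,
          rpow_neg haY.le, rpow_neg_one]
      have h2 : FY x ^ (-t : ℝ) = (FY x ^ t)⁻¹ := by rw [rpow_neg haY.le]
      have hinv : 1 < (FY x ^ t)⁻¹ := (one_lt_inv₀ hqq).mpr hq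
      have hd1 : (1 - (FY x ^ t)⁻¹ : ℝ) ≠ 0 := by linarith
      have hd2 : (FY x * (1 - FY x ^ t) : ℝ) ≠ 0 := by
        exact (mul_pos haY (by linarith)).ne'
      rw [h1, h2, div_eq_div_iff hd1 hd2]
      field_simp
      ring
    rw [eqX, eqY] at H
    have hdX : 0 < FX x * (1 - FX x ^ t) := mul_pos haX (by linarith)
    have hdY : 0 < FY x * (1 - FY x ^ t) := mul_pos haY (by linarith)
    -- cancel t * x
    have H2 : fY x / (FY x * (1 - FY x ^ t)) ≤ fX x / (FX x * (1 - FX x ^ t)) := by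
      have htx : 0 < t * x := by positivity
      rw [mul_div_assoc, mul_div_assoc] at H
      exact le_of_mul_le_mul_left H htx
    have step1 : fY x / FY x * (1 - FX x ^ t)
        ≤ fY x / (FY x * (1 - FY x ^ t)) * (1 - FX x ^ t) := by
      have : fY x / FY x ≤ fY x / (FY x * (1 - FY x ^ t)) := by
        apply div_le_div_of_nonneg_left hfy hdY
        nlinarith
      exact mul_le_mul_of_nonneg_right this (by linarith)
    have step2 : fY x / (FY x * (1 - FY x ^ t)) * (1 - FX x ^ t)
        ≤ fX x / (FX x * (1 - FX x ^ t)) * (1 - FX x ^ t) :=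
      mul_le_mul_of_nonneg_right H2 (by linarith)
    have step3 : fX x / (FX x * (1 - FX x ^ t)) * (1 - FX x ^ t) = fX x / FX x := by
      have hne1 : (1 - FX x ^ t) ≠ 0 := by linarith
      rw [div_mul_eq_mul_div, mul_div_mul_right _ _ hne1]
    linarith
  -- limit t → ∞
  have hlim : Tendsto (fun t : ℝ => fY x / FY x * (1 - FX x ^ t)) atTop
      (nhds (fY x / FY x * (1 - 0))) := by
    exact tendsto_const_nhds.mul
      (tendsto_const_nhds.sub (tendsto_rpow_atTop_of_base_lt_one _ (by linarith) haX1))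
  have := le_of_tendsto hlim (eventually_atTop.mpr ⟨max 0 (-β) + 1, fun t ht =>
    key t (by linarith)⟩)
  simpa using this
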